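/- arXiv:1705.06050 — 3 statements merged into one kernel-verified Lean document; each statement's English description precedes it below -/
import Mathlib

section
/- Let H₁, H₂ be Hermitian operators on ℂ^N, let λ₁,…,λ_N be the eigenvalues of H₂ with corresponding orthonormal eigenvectors ψ₁,…,ψ_N, and assume: (1) (H₁ψ_k, ψ_j) ≠ 0 for all k ≠ j; (2) λ_k − λ_l ≠ λ_{k'} − λ_{l'} for any ordered pairs (k,l) ≠ (k',l') with k≠l, k'≠l'. Then for the Lie algebra ℒ = ℒ(H₁,H₂): if Tr(H₁) = Tr(H₂) = 0 then ℒ equals the subalgebra of all Hermitian operators with zero trace; otherwise ℒ equals the space 𝒪 of all Hermitian operators on ℂ^N. -/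
open Matrix MeasureTheory Filter Topology
open scoped ENNReal

/-- The Borel measurable space structure on matrices (entrywise). -/
instance matrixMeasurableSpace {m n α : Type*} [MeasurableSpace α] :
    MeasurableSpace (Matrix m n α) := MeasurableSpace.pi

/-- `Uexp H t = e^{-itH}`, the unitary evolution generated by the Hermitian operator `H`. -/
noncomputable def Uexp {N : ℕ} (H : Matrix (Fin N) (Fin N) ℂ) (t : ℝ) :
    Matrix (Fin N) (Fin N) ℂ :=
  NormedSpace.exp ((-(Complex.I * t)) • H)

/-- The alternating product `J_n(s₁,…,s_n) = ⋯ U₂^{s₂} U₁^{s₁}`, where the `k`-th factor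
(counting from the right, `k = 1,…,n`) is `e^{-i s_k H₁}` for odd `k` and `e^{-i s_k H₂}`
for even `k`; here `s k` denotes `s_{k+1}`. -/
noncomputable def Jalt {N : ℕ} (H₁ H₂ : Matrix (Fin N) (Fin N) ℂ) :
    ℕ → (ℕ → ℝ) → Matrix (Fin N) (Fin N) ℂ
  | 0, _ => 1
  | n + 1, s => Uexp (if n % 2 = 0 then H₁ else H₂) (s n) * Jalt H₁ H₂ n s

/-- The pair `(H₁, H₂)` satisfies the `U`-controllability condition: for some `n`, the set
`𝒥_n(H₁,H₂)` of all alternating products with nonnegative times equals the whole unitary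
group `U(N)`. -/
def UControllable {N : ℕ} (H₁ H₂ : Matrix (Fin N) (Fin N) ℂ) : Prop :=
  ∃ n : ℕ, {M : Matrix (Fin N) (Fin N) ℂ | ∃ s : ℕ → ℝ, (∀ i, 0 ≤ s i) ∧ Jalt H₁ H₂ n s = M}
    = {M : Matrix (Fin N) (Fin N) ℂ | M ∈ Matrix.unitaryGroup (Fin N) ℂ}

/-- `ℒ(H₁,H₂)`: the smallest real subspace of operators containing `H₁, H₂` and closed under
the bracket `{A,B} = i[A,B]`. -/
noncomputable def LieDynAlg {N : ℕ} (H₁ H₂ : Matrix (Fin N) (Fin N) ℂ) :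
    Submodule ℝ (Matrix (Fin N) (Fin N) ℂ) :=
  sInf {p | H₁ ∈ p ∧ H₂ ∈ p ∧ ∀ A ∈ p, ∀ B ∈ p, Complex.I • (A * B - B * A) ∈ p}

open Polynomial
section Core
variable {N : ℕ}
local notation "O" => Matrix (Fin N) (Fin N) ℂ

lemma s6_lie_mem_left (H₁ H₂ : O) : H₁ ∈ LieDynAlg H₁ H₂ := by
  simp only [LieDynAlg, Submodule.mem_sInf]; exact fun p hp => hp.1
lemma s6_lie_mem_right (H₁ H₂ : O) : H₂ ∈ LieDynAlg H₁ H₂ := by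
  simp only [LieDynAlg, Submodule.mem_sInf]; exact fun p hp => hp.2.1
lemma s6_lie_le {H₁ H₂ : O} {p : Submodule ℝ O} (h1 : H₁ ∈ p) (h2 : H₂ ∈ p)
    (hbr : ∀ A ∈ p, ∀ B ∈ p, Complex.I • (A * B - B * A) ∈ p) :
    LieDynAlg H₁ H₂ ≤ p := sInf_le ⟨h1, h2, hbr⟩

lemma s6_lie_mem_bracket {H₁ H₂ A B : O} (hA : A ∈ LieDynAlg H₁ H₂) (hB : B ∈ LieDynAlg H₁ H₂) :
    Complex.I • (A * B - B * A) ∈ LieDynAlg H₁ H₂ := by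
  simp only [LieDynAlg, Submodule.mem_sInf] at *
  exact fun p hp => hp.2.2 A (hA p hp) B (hB p hp)

/-- the operator ad_D with D = diagonal lam -/
noncomputable def s6ad (lam : Fin N → ℝ) (X : O) : O :=
  Complex.I • (Matrix.diagonal (fun k => (lam k : ℂ)) * X
    - X * Matrix.diagonal (fun k => (lam k : ℂ)))

lemma s6ad_apply (lam : Fin N → ℝ) (X : O) (k l : Fin N) :
    s6ad lam X k l = (Complex.I * ((lam k : ℂ) - lam l)) * X k l := by
  simp only [s6ad, Matrix.smul_apply, Matrix.sub_apply, Matrix.diagonal_mul,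
    Matrix.mul_diagonal, smul_eq_mul]
  ring

lemma s6ad_iter_apply (lam : Fin N → ℝ) (X : O) (m : ℕ) (k l : Fin N) :
    (s6ad lam)^[m] X k l = (Complex.I * ((lam k : ℂ) - lam l)) ^ m * X k l := by
  induction m with
  | zero => simp
  | succ m ih =>
    rw [Function.iterate_succ_apply', s6ad_apply, ih, pow_succ]
    ring

lemma s6ad_iter_mem {G : O} (lam : Fin N → ℝ) {X : O}
    (hX : X ∈ LieDynAlg G (Matrix.diagonal fun k => (lam k : ℂ))) (m : ℕ) :
    (s6ad lam)^[m] X ∈ LieDynAlg G (Matrix.diagonal fun k => (lam k : ℂ)) := by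
  induction m with
  | zero => simpa using hX
  | succ m ih =>
    rw [Function.iterate_succ_apply']
    exact s6_lie_mem_bracket (s6_lie_mem_right _ _) ih

/-- conjugate of an evaluation -/
lemma s6_conj_eval (P : ℂ[X]) (z : ℂ) :
    (P.map (starRingEnd ℂ)).eval ((starRingEnd ℂ) z) = (starRingEnd ℂ) (P.eval z) := by
  rw [Polynomial.eval_map, Polynomial.eval, Polynomial.hom_eval₂]
  rfl

section PQ
variable (lam : Fin N → ℝ) (p q : Fin N)

lemma s6_lam_ne (hgaps : ∀ k l k' l' : Fin N, k ≠ l → k' ≠ l' → (k, l) ≠ (k', l') →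
      lam k - lam l ≠ lam k' - lam l') {k l : Fin N} (hkl : k ≠ l) : lam k ≠ lam l := by
  intro h
  exact hgaps k l l k hkl hkl.symm (by simp [hkl]) (by rw [h])

/-- node set -/
noncomputable def s6s : Finset (Fin N × Fin N) := insert (p, p) Finset.univ.offDiag
/-- node values -/
noncomputable def s6v : Fin N × Fin N → ℂ :=
  fun x => Complex.I * ((lam x.1 : ℂ) - lam x.2)

lemma s6v_real (x : Fin N × Fin N) : s6v lam x = Complex.I * ((lam x.1 - lam x.2 : ℝ) : ℂ) := by
  simp [s6v, Complex.ofReal_sub]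

lemma s6v_inj (hgaps : ∀ k l k' l' : Fin N, k ≠ l → k' ≠ l' → (k, l) ≠ (k', l') →
      lam k - lam l ≠ lam k' - lam l') :
    Set.InjOn (s6v lam) ((s6s p : Finset (Fin N × Fin N)) : Set (Fin N × Fin N)) := by
  intro x hx y hy hxy
  rw [s6v_real, s6v_real] at hxy
  have hI : (Complex.I : ℂ) ≠ 0 := Complex.I_ne_zero
  have h2 : ((lam x.1 - lam x.2 : ℝ) : ℂ) = ((lam y.1 - lam y.2 : ℝ) : ℂ) :=
    mul_left_cancel₀ hI hxy
  have h3 : lam x.1 - lam x.2 = lam y.1 - lam y.2 := by exact_mod_cast h2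
  simp only [s6s, Finset.coe_insert, Set.mem_insert_iff, Finset.mem_coe,
    Finset.mem_offDiag, Finset.mem_univ, true_and] at hx hy
  rcases hx with hx | hx <;> rcases hy with hy | hy
  · rw [hx, hy]
  · exfalso
    rw [hx] at h3
    simp only [sub_self] at h3
    exact s6_lam_ne lam hgaps hy (by linarith)
  · exfalso
    rw [hy] at h3
    simp only [sub_self] at h3
    exact s6_lam_ne lam hgaps hx (by linarith)
  · by_contra hne
    exact hgaps x.1 x.2 y.1 y.2 hx hy (by simpa using hne) h3

variable (w : ℂ)

/-- target values -/
noncomputable def s6r : Fin N × Fin N → ℂ :=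
  fun x => if x = (p, q) then w else if x = (q, p) then (starRingEnd ℂ) w else 0

noncomputable def s6P : ℂ[X] := Lagrange.interpolate (s6s p) (s6v lam) (s6r p q w)

lemma s6_swap_mem {x : Fin N × Fin N} (hx : x ∈ s6s p) : (x.2, x.1) ∈ s6s p := by
  simp only [s6s, Finset.mem_insert, Finset.mem_offDiag, Finset.mem_univ, true_and] at hx ⊢
  rcases hx with h | h
  · left; rw [h]
  · right; exact h.symm

lemma s6v_swap (x : Fin N × Fin N) :
    s6v lam (x.2, x.1) = (starRingEnd ℂ) (s6v lam x) := by
  simp only [s6v]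
  rw [_root_.map_mul]
  simp only [Complex.conj_I, map_sub, Complex.conj_ofReal]
  ring

lemma s6r_swap (hpq : p ≠ q) (x : Fin N × Fin N) :
    s6r p q w (x.2, x.1) = (starRingEnd ℂ) (s6r p q w x) := by
  by_cases h1 : x = (p, q)
  · subst h1
    simp [s6r, Prod.ext_iff, hpq, hpq.symm]
  · by_cases h2 : x = (q, p)
    · subst h2
      simp [s6r, Prod.ext_iff, hpq]
    · have e1 : (x.2, x.1) ≠ (p, q) := by
        intro h; apply h2
        have hx : x = ((x.2, x.1).2, (x.2, x.1).1) := rfl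
        rw [hx, h]
      have e2 : (x.2, x.1) ≠ (q, p) := by
        intro h; apply h1
        have hx : x = ((x.2, x.1).2, (x.2, x.1).1) := rfl
        rw [hx, h]
      simp [s6r, h1, h2, e1, e2]

lemma s6P_conj (hgaps : ∀ k l k' l' : Fin N, k ≠ l → k' ≠ l' → (k, l) ≠ (k', l') →
      lam k - lam l ≠ lam k' - lam l') (hpq : p ≠ q) :
    (s6P lam p q w).map (starRingEnd ℂ) = s6P lam p q w := by
  have hinj := s6v_inj lam p hgaps
  have hdeg : ((s6P lam p q w).map (starRingEnd ℂ)).degree < ((s6s p : Finset (Fin N × Fin N))).card := by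
    refine lt_of_le_of_lt Polynomial.degree_map_le ?_
    exact Lagrange.degree_interpolate_lt _ hinj
  have heval : ∀ x ∈ s6s p,
      ((s6P lam p q w).map (starRingEnd ℂ)).eval (s6v lam x) = s6r p q w x := by
    intro x hx
    have h1 : s6v lam x = (starRingEnd ℂ) (s6v lam (x.2, x.1)) := by
      rw [s6v_swap]; simp
    rw [h1, s6_conj_eval]
    have h2 : (s6P lam p q w).eval (s6v lam (x.2, x.1)) = s6r p q w (x.2, x.1) :=
      Lagrange.eval_interpolate_at_node _ hinj (s6_swap_mem p hx)
    rw [h2, s6r_swap p q w hpq]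
    simp
  have := Lagrange.eq_interpolate_of_eval_eq (s6r p q w) hinj hdeg heval
  rw [this]
  rfl

lemma s6P_coeff_real (hgaps : ∀ k l k' l' : Fin N, k ≠ l → k' ≠ l' → (k, l) ≠ (k', l') →
      lam k - lam l ≠ lam k' - lam l') (hpq : p ≠ q) (m : ℕ) :
    ((s6P lam p q w).coeff m).im = 0 := by
  have := s6P_conj lam p q w hgaps hpq
  have h2 := congrArg (fun P => Polynomial.coeff P m) this
  simp only [Polynomial.coeff_map] at h2
  exact Complex.conj_eq_iff_im.mp h2

lemma s6P_eval_node (hgaps : ∀ k l k' l' : Fin N, k ≠ l → k' ≠ l' → (k, l) ≠ (k', l') →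
      lam k - lam l ≠ lam k' - lam l') {x : Fin N × Fin N} (hx : x ∈ s6s p) :
    (s6P lam p q w).eval (s6v lam x) = s6r p q w x :=
  Lagrange.eval_interpolate_at_node _ (s6v_inj lam p hgaps) hx

end PQ

section Mem
variable (lam : Fin N → ℝ) (G : Matrix (Fin N) (Fin N) ℂ)

lemma s6_std_apply (i j k l : Fin N) (a : ℂ) :
    Matrix.single i j a k l = if i = k ∧ j = l then a else 0 := rfl

lemma s6_poly_mem (P : ℂ[X]) :
    (∑ m ∈ Finset.range (P.natDegree + 1), (P.coeff m).re • (s6ad lam)^[m] G)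
      ∈ LieDynAlg G (Matrix.diagonal fun k => (lam k : ℂ)) := by
  apply Submodule.sum_mem
  intro m _
  exact Submodule.smul_mem _ _ (s6ad_iter_mem lam (s6_lie_mem_left _ _) m)

lemma s6_poly_apply (P : ℂ[X]) (hre : ∀ m, (P.coeff m).im = 0) (k l : Fin N) :
    (∑ m ∈ Finset.range (P.natDegree + 1), (P.coeff m).re • (s6ad lam)^[m] G) k l
      = P.eval (Complex.I * ((lam k : ℂ) - lam l)) * G k l := by
  rw [Polynomial.eval_eq_sum_range, Finset.sum_mul, Matrix.sum_apply]
  apply Finset.sum_congr rfl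
  intro m _
  have hco : ((P.coeff m).re : ℂ) = P.coeff m := by
    apply Complex.ext <;> simp [hre m]
  rw [Matrix.smul_apply, s6ad_iter_apply lam G m k l, Complex.real_smul, hco]
  ring

lemma s6_offdiag_mem
    (hgaps : ∀ k l k' l' : Fin N, k ≠ l → k' ≠ l' → (k, l) ≠ (k', l') →
      lam k - lam l ≠ lam k' - lam l')
    (hG : G.IsHermitian) (p q : Fin N) (hpq : p ≠ q) (w : ℂ) :
    Matrix.single p q (w * G p q)
      + Matrix.single q p ((starRingEnd ℂ) (w * G p q))
      ∈ LieDynAlg G (Matrix.diagonal fun k => (lam k : ℂ)) := by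
  have hre := s6P_coeff_real lam p q w hgaps hpq
  have key : Matrix.single p q (w * G p q)
      + Matrix.single q p ((starRingEnd ℂ) (w * G p q))
      = ∑ m ∈ Finset.range ((s6P lam p q w).natDegree + 1),
          ((s6P lam p q w).coeff m).re • (s6ad lam)^[m] G := by
    ext k l
    rw [Matrix.add_apply, s6_std_apply, s6_std_apply,
      s6_poly_apply lam G (s6P lam p q w) hre k l]
    by_cases hkl : k = l
    · subst hkl
      have hz : Complex.I * ((lam k : ℂ) - lam k) = s6v lam (p, p) := by
        simp [s6v]
      rw [hz, s6P_eval_node lam p q w hgaps (by simp [s6s])]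
      have hr0 : s6r p q w (p, p) = 0 := by
        simp [s6r, Prod.ext_iff, hpq, hpq.symm]
      rw [hr0, zero_mul, if_neg (fun h => hpq (h.1.trans h.2.symm)),
        if_neg (fun h => hpq (h.2.trans h.1.symm))]
      simp
    · have hz : Complex.I * ((lam k : ℂ) - lam l) = s6v lam (k, l) := by
        simp [s6v]
      have hmem : (k, l) ∈ s6s p := by
        simp [s6s, Finset.mem_offDiag, hkl]
      rw [hz, s6P_eval_node lam p q w hgaps hmem]
      by_cases h1 : (k, l) = (p, q)
      · have hp : p = k := (congrArg Prod.fst h1).symm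
        have hq : q = l := (congrArg Prod.snd h1).symm
        subst hp; subst hq
        have hr : s6r p q w (p, q) = w := by simp [s6r]
        rw [hr, if_pos ⟨rfl, rfl⟩, if_neg (fun h => hpq h.2)]
        ring
      · by_cases h2 : (k, l) = (q, p)
        · have hp : q = k := (congrArg Prod.fst h2).symm
          have hq : p = l := (congrArg Prod.snd h2).symm
          subst hp; subst hq
          have hr : s6r p q w (q, p) = (starRingEnd ℂ) w := by
            simp [s6r, Prod.ext_iff, hpq]
          rw [hr, if_neg (fun h => hpq h.1), if_pos ⟨rfl, rfl⟩, zero_add,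
            _root_.map_mul]
          have hcg : (starRingEnd ℂ) (G p q) = G q p := hG.apply q p
          rw [hcg]
        · have hr : s6r p q w (k, l) = 0 := by simp [s6r, h1, h2]
          rw [hr, zero_mul,
            if_neg (fun h => h1 (Prod.ext h.1.symm h.2.symm)),
            if_neg (fun h => h2 (Prod.ext h.1.symm h.2.symm))]
          simp
  rw [key]
  exact s6_poly_mem lam G _

lemma s6_pair_mem
    (hgaps : ∀ k l k' l' : Fin N, k ≠ l → k' ≠ l' → (k, l) ≠ (k', l') →
      lam k - lam l ≠ lam k' - lam l')
    (hG : G.IsHermitian) (hoff : ∀ k l, k ≠ l → G k l ≠ 0)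
    (p q : Fin N) (hpq : p ≠ q) (z : ℂ) :
    Matrix.single p q z + Matrix.single q p ((starRingEnd ℂ) z)
      ∈ LieDynAlg G (Matrix.diagonal fun k => (lam k : ℂ)) := by
  have h := s6_offdiag_mem lam G hgaps hG p q hpq (z / G p q)
  rwa [div_mul_cancel₀ z (hoff p q hpq)] at h

lemma s6_bracket_pair_eq (a : ℂ) (p q : Fin N) (hpq : p ≠ q) :
    Complex.I • ((Matrix.single p q a + Matrix.single q p ((starRingEnd ℂ) a)) *
        (Matrix.single p q (Complex.I * a)
          + Matrix.single q p ((starRingEnd ℂ) (Complex.I * a)))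
      - (Matrix.single p q (Complex.I * a)
          + Matrix.single q p ((starRingEnd ℂ) (Complex.I * a))) *
        (Matrix.single p q a + Matrix.single q p ((starRingEnd ℂ) a)))
      = (2 * Complex.normSq a : ℝ) •
          (Matrix.single p p (1 : ℂ) - Matrix.single q q (1 : ℂ)) := by
  rw [add_mul, add_mul, mul_add, mul_add, mul_add, mul_add]
  rw [Matrix.single_mul_single_of_ne (h := hpq.symm), Matrix.single_mul_single_of_ne (h := hpq),
    Matrix.single_mul_single_of_ne (h := hpq.symm), Matrix.single_mul_single_of_ne (h := hpq),
    Matrix.single_mul_single_same, Matrix.single_mul_single_same, Matrix.single_mul_single_same,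
    Matrix.single_mul_single_same]
  ext i j
  simp only [Matrix.smul_apply, Matrix.sub_apply, Matrix.add_apply, Matrix.zero_apply,
    Matrix.single, Matrix.of_apply, smul_eq_mul, Complex.real_smul]
  split_ifs with c1 c2 <;>
    simp_all [_root_.map_mul, Complex.conj_I, Complex.normSq_eq_conj_mul_self] <;>
      ring_nf <;> simp [Complex.I_sq] <;> ring

lemma s6_diagpair_mem
    (hgaps : ∀ k l k' l' : Fin N, k ≠ l → k' ≠ l' → (k, l) ≠ (k', l') →
      lam k - lam l ≠ lam k' - lam l')
    (hG : G.IsHermitian) (hoff : ∀ k l, k ≠ l → G k l ≠ 0)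
    (p q : Fin N) (hpq : p ≠ q) :
    (Matrix.single p p (1 : ℂ) - Matrix.single q q (1 : ℂ))
      ∈ LieDynAlg G (Matrix.diagonal fun k => (lam k : ℂ)) := by
  have ha : G p q ≠ 0 := hoff p q hpq
  have hA := s6_pair_mem lam G hgaps hG hoff p q hpq (G p q)
  have hB := s6_pair_mem lam G hgaps hG hoff p q hpq (Complex.I * G p q)
  have hC := s6_lie_mem_bracket hA hB
  rw [s6_bracket_pair_eq (G p q) p q hpq] at hC
  have h2 : (0:ℝ) < 2 * Complex.normSq (G p q) := by
    have := Complex.normSq_pos.mpr ha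
    linarith
  have h3 := Submodule.smul_mem (LieDynAlg G (Matrix.diagonal fun k => (lam k : ℂ)))
    ((2 * Complex.normSq (G p q) : ℝ)⁻¹) hC
  rwa [smul_smul, inv_mul_cancel₀ h2.ne', one_smul] at h3

lemma s6_smul_std (d : ℝ) (k : Fin N) :
    d • Matrix.single k k (1 : ℂ) = Matrix.single k k ((d : ℂ)) := by
  ext i j
  simp [s6_std_apply, Matrix.smul_apply, smul_ite, Complex.real_smul]

lemma s6_sum_std_diag (f : Fin N → ℂ) :
    ∑ k, Matrix.single k k (f k) = Matrix.diagonal f := by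
  ext i j
  rw [Matrix.sum_apply]
  by_cases hij : i = j
  · subst hij
    rw [Finset.sum_eq_single i (fun k _ hk => by rw [s6_std_apply, if_neg (fun h => hk h.1)])
      (fun h => absurd (Finset.mem_univ i) h)]
    simp [s6_std_apply, Matrix.diagonal_apply]
  · rw [Finset.sum_eq_zero (fun k _ => by
      rw [s6_std_apply, if_neg (fun h => hij (h.1.symm.trans h.2))])]
    simp [Matrix.diagonal_apply, hij]

lemma s6_diag_mem (hN : 0 < N)
    (hgaps : ∀ k l k' l' : Fin N, k ≠ l → k' ≠ l' → (k, l) ≠ (k', l') →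
      lam k - lam l ≠ lam k' - lam l')
    (hG : G.IsHermitian) (hoff : ∀ k l, k ≠ l → G k l ≠ 0)
    (d : Fin N → ℝ) (hsum : ∑ k, d k = 0) :
    Matrix.diagonal (fun k => (d k : ℂ))
      ∈ LieDynAlg G (Matrix.diagonal fun k => (lam k : ℂ)) := by
  set z : Fin N := ⟨0, hN⟩ with hz
  have hmem : ∀ k : Fin N, (Matrix.single k k (1 : ℂ) - Matrix.single z z 1)
      ∈ LieDynAlg G (Matrix.diagonal fun k => (lam k : ℂ)) := by
    intro k
    by_cases hk : k = z
    · subst hk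
      rw [sub_self]
      exact Submodule.zero_mem _
    · exact s6_diagpair_mem lam G hgaps hG hoff k z hk
  have key : Matrix.diagonal (fun k => (d k : ℂ))
      = ∑ k, d k • (Matrix.single k k (1 : ℂ) - Matrix.single z z 1) := by
    have h1 : ∀ k : Fin N, d k • (Matrix.single k k (1 : ℂ) - Matrix.single z z 1)
        = d k • Matrix.single k k (1 : ℂ) - d k • Matrix.single z z (1 : ℂ) :=
      fun k => smul_sub _ _ _
    rw [Finset.sum_congr rfl (fun k _ => h1 k), Finset.sum_sub_distrib, ← Finset.sum_smul,
      hsum, zero_smul, sub_zero]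
    rw [Finset.sum_congr rfl (fun k _ => s6_smul_std (d k) k), s6_sum_std_diag]
  rw [key]
  exact Submodule.sum_mem _ (fun k _ => Submodule.smul_mem _ _ (hmem k))

lemma s6_su_mem (hN : 0 < N)
    (hgaps : ∀ k l k' l' : Fin N, k ≠ l → k' ≠ l' → (k, l) ≠ (k', l') →
      lam k - lam l ≠ lam k' - lam l')
    (hG : G.IsHermitian) (hoff : ∀ k l, k ≠ l → G k l ≠ 0)
    (X : Matrix (Fin N) (Fin N) ℂ) (hX : X.IsHermitian) (hTr : X.trace = 0) :
    X ∈ LieDynAlg G (Matrix.diagonal fun k => (lam k : ℂ)) := by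
  classical
  set L := LieDynAlg G (Matrix.diagonal fun k => (lam k : ℂ)) with hL
  -- off-diagonal part
  set Y : Matrix (Fin N) (Fin N) ℂ :=
    ∑ x ∈ Finset.univ.offDiag, Matrix.single x.1 x.2 (X x.1 x.2) with hY
  have hYmem : Y ∈ L := by
    have hswap : ∑ x ∈ Finset.univ.offDiag,
        Matrix.single x.2 x.1 ((starRingEnd ℂ) (X x.1 x.2)) = Y := by
      refine Finset.sum_bij' (fun x _ => (x.2, x.1)) (fun x _ => (x.2, x.1)) ?_ ?_ ?_ ?_ ?_
      · intro x hx
        simp only [Finset.mem_offDiag, Finset.mem_univ, true_and] at hx ⊢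
        exact hx.symm
      · intro x hx
        simp only [Finset.mem_offDiag, Finset.mem_univ, true_and] at hx ⊢
        exact hx.symm
      · intro x _; rfl
      · intro x _; rfl
      · intro x _
        have : (starRingEnd ℂ) (X x.1 x.2) = X x.2 x.1 := hX.apply x.2 x.1
        rw [this]
    have step : Y = (2 : ℝ)⁻¹ • ∑ x ∈ Finset.univ.offDiag,
        (Matrix.single x.1 x.2 (X x.1 x.2)
          + Matrix.single x.2 x.1 ((starRingEnd ℂ) (X x.1 x.2))) := by
      rw [Finset.sum_add_distrib, hswap, ← hY, ← two_smul ℝ Y, smul_smul]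
      norm_num
    rw [step]
    refine Submodule.smul_mem _ _ (Submodule.sum_mem _ (fun x hx => ?_))
    have hxne : x.1 ≠ x.2 := (Finset.mem_offDiag.mp hx).2.2
    exact s6_pair_mem lam G hgaps hG hoff x.1 x.2 hxne (X x.1 x.2)
  -- diagonal part
  have hdiagre : ∀ k, ((X k k).re : ℂ) = X k k := by
    intro k
    have h := hX.apply k k
    have him : (X k k).im = 0 := Complex.conj_eq_iff_im.mp h
    apply Complex.ext <;> simp [him]
  have hdsum : ∑ k, (X k k).re = 0 := by
    have h1 : X.trace = ∑ k, X k k := rfl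
    have h2 : (X.trace).re = 0 := by rw [hTr]; rfl
    rw [h1, Complex.re_sum] at h2
    exact h2
  have hdiag : Matrix.diagonal (fun k => X k k) ∈ L := by
    have := s6_diag_mem lam G hN hgaps hG hoff (fun k => (X k k).re) hdsum
    have heq : Matrix.diagonal (fun k => (((X k k).re : ℝ) : ℂ))
        = Matrix.diagonal (fun k => X k k) := by
      rw [show (fun k => (((X k k).re : ℝ) : ℂ)) = fun k => X k k from funext hdiagre]
    rwa [heq] at this
  -- decomposition
  have hdecomp : X = Y + Matrix.diagonal (fun k => X k k) := by
    have h0 := Matrix.matrix_eq_sum_single X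
    have h1 : ∑ i, ∑ j, Matrix.single i j (X i j)
        = ∑ x ∈ Finset.univ ×ˢ Finset.univ, Matrix.single x.1 x.2 (X x.1 x.2) :=
      (Finset.sum_product' _ _ _).symm
    have h2 : (Finset.univ ×ˢ Finset.univ : Finset (Fin N × Fin N))
        = Finset.univ.diag ∪ Finset.univ.offDiag := (Finset.diag_union_offDiag _).symm
    conv_lhs => rw [h0]
    rw [h1, h2, Finset.sum_union (Finset.disjoint_diag_offDiag _), Finset.sum_diag,
      s6_sum_std_diag (fun k => X k k)]
    exact add_comm (Matrix.diagonal fun k => X k k) Y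
  rw [hdecomp]
  exact Submodule.add_mem _ hYmem hdiag

end Mem
lemma s6_conj_bracket (U : O) (hU' : U * Uᴴ = 1) (A B : O) :
    Uᴴ * (Complex.I • (A * B - B * A)) * U
      = Complex.I • ((Uᴴ*A*U) * (Uᴴ*B*U) - (Uᴴ*B*U) * (Uᴴ*A*U)) := by
  have h : ∀ X Y : O, (Uᴴ*X*U) * (Uᴴ*Y*U) = Uᴴ*(X*Y)*U := by
    intro X Y
    calc (Uᴴ*X*U) * (Uᴴ*Y*U) = Uᴴ*X*(U*Uᴴ)*(Y*U) := by simp only [mul_assoc]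
    _ = Uᴴ*(X*Y)*U := by rw [hU']; simp only [mul_one, mul_assoc]
  rw [h, h, Matrix.mul_smul, Matrix.smul_mul, mul_sub, sub_mul]

lemma s6_lie_conj_mem {H₁ H₂ : O} (U : O) (hU : Uᴴ * U = 1) {X : O}
    (hX : X ∈ LieDynAlg H₁ H₂) :
    Uᴴ * X * U ∈ LieDynAlg (Uᴴ * H₁ * U) (Uᴴ * H₂ * U) := by
  have hU' : U * Uᴴ = 1 := mul_eq_one_comm.mp hU
  set f : O →ₗ[ℝ] O := (LinearMap.mulRight ℝ U).comp (LinearMap.mulLeft ℝ Uᴴ) with hf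
  have hfapp : ∀ A : O, f A = Uᴴ * A * U := fun A => rfl
  have hle : LieDynAlg H₁ H₂ ≤ (LieDynAlg (Uᴴ*H₁*U) (Uᴴ*H₂*U)).comap f := by
    apply s6_lie_le
    · rw [Submodule.mem_comap, hfapp]; exact s6_lie_mem_left _ _
    · rw [Submodule.mem_comap, hfapp]; exact s6_lie_mem_right _ _
    · intro A hA B hB
      rw [Submodule.mem_comap, hfapp] at *
      rw [s6_conj_bracket U hU']
      exact s6_lie_mem_bracket hA hB
  have := hle hX
  rwa [Submodule.mem_comap, hfapp] at this

lemma s6_lie_conj_mem_iff {H₁ H₂ : O} (U : O) (hU : Uᴴ * U = 1) (X : O) :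
    X ∈ LieDynAlg H₁ H₂ ↔ Uᴴ * X * U ∈ LieDynAlg (Uᴴ * H₁ * U) (Uᴴ * H₂ * U) := by
  have hU' : U * Uᴴ = 1 := mul_eq_one_comm.mp hU
  constructor
  · exact s6_lie_conj_mem U hU
  · intro h
    have h2 : (Uᴴ)ᴴ * Uᴴ = 1 := by rwa [conjTranspose_conjTranspose]
    have := s6_lie_conj_mem (H₁ := Uᴴ*H₁*U) (H₂ := Uᴴ*H₂*U) Uᴴ h2 h
    have unconj : ∀ A : O, (Uᴴ)ᴴ * (Uᴴ * A * U) * Uᴴ = A := by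
      intro A
      rw [conjTranspose_conjTranspose]
      calc U * (Uᴴ * A * U) * Uᴴ = (U * Uᴴ) * A * (U * Uᴴ) := by simp only [mul_assoc]
      _ = A := by rw [hU']; simp
    rwa [unconj, unconj, unconj] at this



lemma s6_conjT_real_smul (r : ℝ) (M : Matrix (Fin N) (Fin N) ℂ) : (r • M)ᴴ = r • Mᴴ := by
  ext i j
  simp [Matrix.conjTranspose_apply, Matrix.smul_apply, Complex.real_smul, _root_.map_mul,
    Complex.conj_ofReal]

lemma s6_bracket_herm {A B : Matrix (Fin N) (Fin N) ℂ} (hA : A.IsHermitian) (hB : B.IsHermitian) :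
    (Complex.I • (A * B - B * A)).IsHermitian := by
  have h1 : (Complex.I • (A * B - B * A))ᴴ = (starRingEnd ℂ) Complex.I • (A * B - B * A)ᴴ :=
    Matrix.conjTranspose_smul _ _
  rw [Matrix.IsHermitian, h1, Matrix.conjTranspose_sub, Matrix.conjTranspose_mul,
    Matrix.conjTranspose_mul, hA.eq, hB.eq, Complex.conj_I, neg_smul, ← smul_neg, neg_sub]

lemma s6_bracket_trace (A B : Matrix (Fin N) (Fin N) ℂ) :
    (Complex.I • (A * B - B * A)).trace = 0 := by
  rw [Matrix.trace_smul, Matrix.trace_sub, Matrix.trace_mul_comm, sub_self, smul_zero]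

/-- Hermitian matrices as an ℝ-submodule -/
noncomputable def s6_pH (N : ℕ) : Submodule ℝ (Matrix (Fin N) (Fin N) ℂ) where
  carrier := {A | A.IsHermitian}
  zero_mem' := Matrix.isHermitian_zero
  add_mem' := fun ha hb => ha.add hb
  smul_mem' := fun c A hA => by
    show (c • A).IsHermitian
    rw [Matrix.IsHermitian, s6_conjT_real_smul, hA.eq]

/-- traceless Hermitian matrices as an ℝ-submodule -/
noncomputable def s6_pT (N : ℕ) : Submodule ℝ (Matrix (Fin N) (Fin N) ℂ) where
  carrier := {A | A.IsHermitian ∧ A.trace = 0}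
  zero_mem' := ⟨Matrix.isHermitian_zero, by simp⟩
  add_mem' := fun ha hb => ⟨ha.1.add hb.1, by rw [Matrix.trace_add, ha.2, hb.2, add_zero]⟩
  smul_mem' := fun c A hA => ⟨by
      show (c • A).IsHermitian
      rw [Matrix.IsHermitian, s6_conjT_real_smul, hA.1.eq],
    by rw [Matrix.trace_smul, hA.2, smul_zero]⟩

lemma s6_herm_trace_real {A : Matrix (Fin N) (Fin N) ℂ} (hA : A.IsHermitian) :
    A.trace = ((A.trace).re : ℂ) := by
  have him : (A.trace).im = 0 := by
    have h1 : A.trace = ∑ k, A k k := rfl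
    rw [h1, Complex.im_sum]
    refine Finset.sum_eq_zero (fun k _ => ?_)
    exact Complex.conj_eq_iff_im.mp (hA.apply k k)
  apply Complex.ext <;> simp [him]

end Core

/-- **Theorem (constructive controllability criterion).** Let `λ₁,…,λ_N` be the eigenvalues of
`H₂` with orthonormal eigenvectors `ψ₁,…,ψ_N`, and assume that all matrix elements
`(H₁ψ_k,ψ_j)`, `k ≠ j`, are nonzero and that the differences `λ_k − λ_l` (`k ≠ l`) are
pairwise distinct. Then: if `Tr H₁ = Tr H₂ = 0`, the dynamical Lie algebra `ℒ(H₁,H₂)` equals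
the set of traceless Hermitian operators; otherwise it equals the set of all Hermitian
operators. -/
theorem stmt6 {N : ℕ} (hN : 1 < N) (H₁ H₂ : Matrix (Fin N) (Fin N) ℂ)
    (h₁ : H₁.IsHermitian) (h₂ : H₂.IsHermitian)
    (lam : Fin N → ℝ) (ψ : Fin N → (Fin N → ℂ))
    (horth : ∀ k l, dotProduct (star (ψ k)) (ψ l) = if k = l then 1 else 0)
    (heig : ∀ k, H₂ *ᵥ ψ k = (lam k : ℂ) • ψ k)
    (hoffdiag : ∀ k l, k ≠ l → dotProduct (star (ψ l)) (H₁ *ᵥ ψ k) ≠ 0)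
    (hgaps : ∀ k l k' l' : Fin N, k ≠ l → k' ≠ l' → (k, l) ≠ (k', l') →
      lam k - lam l ≠ lam k' - lam l') :
    (H₁.trace = 0 ∧ H₂.trace = 0 →
      (LieDynAlg H₁ H₂ : Set (Matrix (Fin N) (Fin N) ℂ)) =
        {A : Matrix (Fin N) (Fin N) ℂ | A.IsHermitian ∧ A.trace = 0}) ∧
    (¬ (H₁.trace = 0 ∧ H₂.trace = 0) →
      (LieDynAlg H₁ H₂ : Set (Matrix (Fin N) (Fin N) ℂ)) =
        {A : Matrix (Fin N) (Fin N) ℂ | A.IsHermitian}) := by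
  classical
  have hN0 : 0 < N := Nat.lt_of_lt_of_le Nat.zero_lt_one hN.le
  set U : Matrix (Fin N) (Fin N) ℂ := Matrix.of (fun k l => ψ l k) with hUdef
  have hUU : Uᴴ * U = 1 := by
    ext k l
    rw [Matrix.mul_apply, Matrix.one_apply]
    have h := horth k l
    simp only [dotProduct, Pi.star_apply] at h
    simpa only [Matrix.conjTranspose_apply, hUdef, Matrix.of_apply] using h
  have hUU' : U * Uᴴ = 1 := mul_eq_one_comm.mp hUU
  have hH2U : H₂ * U = U * Matrix.diagonal (fun k => (lam k : ℂ)) := by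
    ext k l
    rw [Matrix.mul_apply, Matrix.mul_diagonal]
    have h := congrFun (heig l) k
    simp only [Matrix.mulVec, dotProduct, Pi.smul_apply, smul_eq_mul] at h
    simp only [hUdef, Matrix.of_apply]
    rw [h]
    ring
  have hD : Uᴴ * H₂ * U = Matrix.diagonal (fun k => (lam k : ℂ)) := by
    rw [Matrix.mul_assoc, hH2U, ← Matrix.mul_assoc, hUU, Matrix.one_mul]
  have hhermconj : ∀ X : Matrix (Fin N) (Fin N) ℂ, X.IsHermitian → (Uᴴ * X * U).IsHermitian := by
    intro X hX
    rw [Matrix.IsHermitian, Matrix.conjTranspose_mul, Matrix.conjTranspose_mul,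
      Matrix.conjTranspose_conjTranspose, hX.eq, Matrix.mul_assoc]
  have hGherm : (Uᴴ * H₁ * U).IsHermitian := hhermconj H₁ h₁
  have hGoff : ∀ k l, k ≠ l → (Uᴴ * H₁ * U) k l ≠ 0 := by
    intro k l hkl
    have h := hoffdiag l k (fun h' => hkl h'.symm)
    have he : (Uᴴ * H₁ * U) k l = dotProduct (star (ψ k)) (H₁ *ᵥ ψ l) := by
      simp only [Matrix.mul_apply, Matrix.conjTranspose_apply, hUdef, Matrix.of_apply,
        dotProduct, Matrix.mulVec, Pi.star_apply, Finset.sum_mul, Finset.mul_sum]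
      rw [Finset.sum_comm]
      refine Finset.sum_congr rfl (fun a _ => Finset.sum_congr rfl (fun b _ => by ring))
    rw [he]; exact h
  have htraceconj : ∀ X : Matrix (Fin N) (Fin N) ℂ, (Uᴴ * X * U).trace = X.trace := by
    intro X
    rw [Matrix.trace_mul_cycle, hUU', Matrix.one_mul]
  have su_orig : ∀ X : Matrix (Fin N) (Fin N) ℂ, X.IsHermitian → X.trace = 0 →
      X ∈ LieDynAlg H₁ H₂ := by
    intro X hXh hXt
    rw [s6_lie_conj_mem_iff U hUU X, hD]
    exact s6_su_mem lam (Uᴴ * H₁ * U) hN0 hgaps hGherm hGoff _ (hhermconj X hXh)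
      (by rw [htraceconj, hXt])
  have hle_pH : LieDynAlg H₁ H₂ ≤ s6_pH N :=
    s6_lie_le h₁ h₂ (fun A hA B hB => s6_bracket_herm hA hB)
  constructor
  · rintro ⟨ht1, ht2⟩
    apply Set.eq_of_subset_of_subset
    · intro A hA
      have hle : LieDynAlg H₁ H₂ ≤ s6_pT N :=
        s6_lie_le ⟨h₁, ht1⟩ ⟨h₂, ht2⟩
          (fun A hA B hB => ⟨s6_bracket_herm hA.1 hB.1, s6_bracket_trace A B⟩)
      exact hle hA
    · intro A hA
      exact su_orig A hA.1 hA.2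
  · intro hne
    apply Set.eq_of_subset_of_subset
    · intro A hA
      exact hle_pH hA
    · intro A hA
      simp only [Set.mem_setOf_eq] at hA
      simp only [SetLike.mem_coe]
      obtain ⟨H, hHmem, hHherm, hHt⟩ :
          ∃ H, H ∈ LieDynAlg H₁ H₂ ∧ H.IsHermitian ∧ H.trace ≠ 0 := by
        rcases not_and_or.mp hne with h | h
        · exact ⟨H₁, s6_lie_mem_left _ _, h₁, h⟩
        · exact ⟨H₂, s6_lie_mem_right _ _, h₂, h⟩
      have hNne : (N : ℝ) ≠ 0 := Nat.cast_ne_zero.mpr hN0.ne'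
      have hsm_herm : ∀ r : ℝ, (r • (1 : Matrix (Fin N) (Fin N) ℂ)).IsHermitian := by
        intro r
        rw [Matrix.IsHermitian, s6_conjT_real_smul, Matrix.conjTranspose_one]
      have hsm_trace : ∀ r : ℝ, (r • (1 : Matrix (Fin N) (Fin N) ℂ)).trace = ((r * N : ℝ) : ℂ) := by
        intro r
        rw [Matrix.trace_smul, Matrix.trace_one, Complex.real_smul]
        norm_num [Fintype.card_fin]
      set t : ℝ := (H.trace).re with hts
      have htne : t ≠ 0 := by
        intro h0
        apply hHt
        rw [s6_herm_trace_real hHherm, ← hts, h0]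
        simp
      have one_mem : (1 : Matrix (Fin N) (Fin N) ℂ) ∈ LieDynAlg H₁ H₂ := by
        have hX0h : (H - (t / N : ℝ) • 1).IsHermitian := hHherm.sub (hsm_herm _)
        have hX0t : (H - (t / N : ℝ) • 1).trace = 0 := by
          rw [Matrix.trace_sub, hsm_trace, s6_herm_trace_real hHherm, ← hts,
            div_mul_cancel₀ t hNne, sub_self]
        have hX0mem := su_orig _ hX0h hX0t
        have h1 : (t / N : ℝ) • (1 : Matrix (Fin N) (Fin N) ℂ)
            = H - (H - (t / N : ℝ) • 1) := (sub_sub_cancel _ _).symm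
        have h2 : (t / N : ℝ) • (1 : Matrix (Fin N) (Fin N) ℂ) ∈ LieDynAlg H₁ H₂ := by
          rw [h1]; exact Submodule.sub_mem _ hHmem hX0mem
        have h3 := Submodule.smul_mem (LieDynAlg H₁ H₂) ((N / t : ℝ)) h2
        rwa [smul_smul, show (N / t : ℝ) * (t / N) = 1 by field_simp, one_smul] at h3
      have hA0h : (A - ((A.trace).re / N : ℝ) • 1).IsHermitian := hA.sub (hsm_herm _)
      have hA0t : (A - ((A.trace).re / N : ℝ) • 1).trace = 0 := by
        rw [Matrix.trace_sub, hsm_trace, div_mul_cancel₀ _ hNne, ← s6_herm_trace_real hA,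
          sub_self]
      have hmem0 := su_orig _ hA0h hA0t
      have hfin : A = (A - ((A.trace).re / N : ℝ) • 1) + ((A.trace).re / N : ℝ) • 1 :=
        (sub_add_cancel _ _).symm
      rw [hfin]
      exact Submodule.add_mem _ hmem0 (Submodule.smul_mem _ _ one_mem)
end

section
/- Let H₁, H₂ be Hermitian operators on ℂ^N, λ₁,…,λ_N the eigenvalues of H₂ with orthonormal eigenvectors ψ₁,…,ψ_N, and assume (H₁ψ_k,ψ_j) ≠ 0 for all k ≠ j and λ_k − λ_l ≠ λ_{k'} − λ_{l'} for any distinct ordered pairs (k,l) ≠ (k',l') with k≠l, k'≠l'. Then the subspace 𝒯 = {H Hermitian : (Hψ_k,ψ_k) = 0 for all k} is contained in ℒ(H₁,H₂); in fact the real linear span of T(H₁), T²(H₁), …, where T(H) = {H₂,H}, coincides with 𝒯, which has real dimension N(N−1). -/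
open Matrix MeasureTheory Filter Topology
open scoped ENNReal

section Stmt15AuxSection
open Polynomial

namespace Stmt15Aux

variable {N : ℕ}

/-- The transformation `T` in the eigenbasis: commutator with the diagonal matrix. -/
noncomputable def Tmap (lam : Fin N → ℝ) (H : Matrix (Fin N) (Fin N) ℂ) :
    Matrix (Fin N) (Fin N) ℂ :=
  Complex.I • (Matrix.diagonal (fun k => (lam k : ℂ)) * H
    - H * Matrix.diagonal (fun k => (lam k : ℂ)))

/-- entrywise action of `Tmap` -/
lemma Tmap_apply (lam : Fin N → ℝ) (H : Matrix (Fin N) (Fin N) ℂ) (k l : Fin N) :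
    Tmap lam H k l = (Complex.I * ((lam k : ℂ) - lam l)) * H k l := by
  simp [Tmap, Matrix.diagonal_mul, Matrix.mul_diagonal, Matrix.sub_apply]
  ring

lemma Tmap_iterate_apply (lam : Fin N → ℝ) (G : Matrix (Fin N) (Fin N) ℂ) (m : ℕ)
    (k l : Fin N) :
    ((Tmap lam)^[m] G) k l = (Complex.I * ((lam k : ℂ) - lam l)) ^ m * G k l := by
  induction m with
  | zero => simp
  | succ m ih =>
    rw [Function.iterate_succ_apply', Tmap_apply, ih, pow_succ]
    ring

lemma Tmap_iterate_herm (lam : Fin N → ℝ) (G : Matrix (Fin N) (Fin N) ℂ)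
    (hG : Gᴴ = G) (m : ℕ) : ((Tmap lam)^[m] G)ᴴ = (Tmap lam)^[m] G := by
  ext k l
  rw [Matrix.conjTranspose_apply, Tmap_iterate_apply, Tmap_iterate_apply]
  have hGkl : (starRingEnd ℂ) (G l k) = G k l := by
    conv_rhs => rw [← hG]
    simp [Matrix.conjTranspose_apply]
  have : star ((Complex.I * ((lam l :ℂ) - lam k)) ^ m * G l k)
      = (star (Complex.I * ((lam l:ℂ) - lam k))) ^ m * star (G l k) := by
    rw [star_mul', star_pow]
  rw [this]
  have h2 : star (Complex.I * ((lam l:ℂ) - lam k)) = Complex.I * ((lam k:ℂ) - lam l) := by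
    simp [star_mul', Complex.star_def, Complex.conj_ofReal]
    ring
  rw [h2]
  exact congrArg _ hGkl

noncomputable section

/-- The target space `𝒯` in diagonal coordinates. -/
def TcalD (N : ℕ) : Submodule ℝ (Matrix (Fin N) (Fin N) ℂ) where
  carrier := {H | Hᴴ = H ∧ ∀ k, H k k = 0}
  add_mem' := by
    rintro a b ⟨ha1, ha2⟩ ⟨hb1, hb2⟩
    exact ⟨by rw [Matrix.conjTranspose_add, ha1, hb1], fun k => by
      simp [Matrix.add_apply, ha2 k, hb2 k]⟩
  zero_mem' := by simp
  smul_mem' := by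
    rintro c a ⟨ha1, ha2⟩
    refine ⟨?_, fun k => by simp [Matrix.smul_apply, ha2 k]⟩
    rw [Matrix.conjTranspose_smul, ha1, star_trivial]

lemma span_le_TcalD (lam : Fin N → ℝ) (G : Matrix (Fin N) (Fin N) ℂ) (hG : Gᴴ = G) :
    Submodule.span ℝ {A | ∃ m : ℕ, 1 ≤ m ∧ A = (Tmap lam)^[m] G} ≤ TcalD N := by
  rw [Submodule.span_le]
  rintro A ⟨m, hm, rfl⟩
  refine ⟨Tmap_iterate_herm lam G hG m, fun k => ?_⟩
  rw [Tmap_iterate_apply]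
  simp [sub_self, zero_pow (Nat.one_le_iff_ne_zero.mp hm)]

section Interp

variable (lam : Fin N → ℝ)
variable (hgaps : ∀ k l k' l' : Fin N, k ≠ l → k' ≠ l' → (k, l) ≠ (k', l') →
      lam k - lam l ≠ lam k' - lam l')

include hgaps in
lemma lam_ne : ∀ k l : Fin N, k ≠ l → lam k ≠ lam l := by
  intro k l h heq
  exact hgaps k l l k h h.symm (fun hp => h (congrArg Prod.fst hp))
    (by rw [heq])

/-- the nodes -/
noncomputable def nodes : Fin N × Fin N → ℂ :=
  fun p => Complex.I * ((lam p.1 : ℂ) - lam p.2)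

lemma nodes_inj_aux {a b : Fin N × Fin N} (h : nodes lam a = nodes lam b) :
    lam a.1 - lam a.2 = lam b.1 - lam b.2 := by
  have := mul_left_cancel₀ Complex.I_ne_zero h
  exact_mod_cast this

include hgaps in
lemma nodes_injOn (d : Fin N) :
    Set.InjOn (nodes lam)
      ↑(insert (d, d) (Finset.univ.filter fun p : Fin N × Fin N => p.1 ≠ p.2)) := by
  intro p hp q hq hpq
  have hpq' := nodes_inj_aux lam hpq
  simp only [Finset.coe_insert, Set.mem_insert_iff, Finset.coe_filter,
    Set.mem_setOf_eq, Finset.mem_univ, true_and] at hp hq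
  rcases hp with hp | hp <;> rcases hq with hq | hq
  · rw [hp, hq]
  · exfalso
    rw [hp] at hpq'
    simp only [sub_self] at hpq'
    exact lam_ne lam hgaps q.1 q.2 hq (by linarith)
  · exfalso
    rw [hq] at hpq'
    simp only [sub_self] at hpq'
    exact lam_ne lam hgaps p.1 p.2 hp (by linarith)
  · by_contra hne
    exact hgaps p.1 p.2 q.1 q.2 hp hq
      (by rw [Prod.mk.eta, Prod.mk.eta]; exact hne) hpq'

include hgaps in
lemma exists_interp (G : Matrix (Fin N) (Fin N) ℂ)
    (hGoff : ∀ k l : Fin N, k ≠ l → G k l ≠ 0)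
    (hN : 0 < N) (k l : Fin N) (hkl : k ≠ l) :
    ∃ (n : ℕ) (z : ℕ → ℂ), z 0 = 0 ∧
      (∑ m ∈ Finset.range n, z m • (Tmap lam)^[m] G) = Matrix.single k l 1 := by
  classical
  set d : Fin N := ⟨0, hN⟩
  set s : Finset (Fin N × Fin N) :=
    insert (d, d) (Finset.univ.filter fun p : Fin N × Fin N => p.1 ≠ p.2) with hs
  have hinj : Set.InjOn (nodes lam) ↑s := nodes_injOn lam hgaps d
  set r : Fin N × Fin N → ℂ := fun p => if p = (k, l) then (G k l)⁻¹ else 0 with hr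
  set Q : Polynomial ℂ := Lagrange.interpolate s (nodes lam) r with hQ
  have hdd : (d, d) ∈ s := Finset.mem_insert_self _ _
  have hnode_dd : nodes lam (d, d) = 0 := by simp [nodes]
  have hrdd : r (d, d) = 0 := by
    have hne : (d, d) ≠ (k, l) := by
      intro h
      exact hkl ((congrArg Prod.fst h).symm.trans (congrArg Prod.snd h))
    simp [hr, hne]
  have hQ0 : Q.eval 0 = 0 := by
    have heval := Lagrange.eval_interpolate_at_node r hinj hdd
    rw [hnode_dd] at heval
    rw [hQ, heval, hrdd]
  refine ⟨Q.natDegree + 1, Q.coeff, by rw [Polynomial.coeff_zero_eq_eval_zero, hQ0], ?_⟩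
  ext p q
  rw [Matrix.sum_apply]
  have hentry : ∀ m ∈ Finset.range (Q.natDegree + 1),
      (Q.coeff m • (Tmap lam)^[m] G) p q = Q.coeff m * (nodes lam (p, q)) ^ m * G p q := by
    intro m _
    rw [Matrix.smul_apply, Tmap_iterate_apply, smul_eq_mul, nodes, mul_assoc]
  rw [Finset.sum_congr rfl hentry, ← Finset.sum_mul]
  have hsum : ∑ m ∈ Finset.range (Q.natDegree + 1), Q.coeff m * (nodes lam (p, q)) ^ m
      = Q.eval (nodes lam (p, q)) := (Polynomial.eval_eq_sum_range _).symm
  rw [hsum]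
  by_cases hpq : p = q
  · subst hpq
    have : nodes lam (p, p) = 0 := by simp [nodes]
    rw [this, hQ0, zero_mul,
      Matrix.single_apply_of_ne k l 1 p p (fun h => hkl (h.1.trans h.2.symm))]
  · have hmem : (p, q) ∈ s := by
      rw [hs]
      exact Finset.mem_insert_of_mem (Finset.mem_filter.mpr ⟨Finset.mem_univ _, hpq⟩)
    rw [hQ, Lagrange.eval_interpolate_at_node r hinj hmem]
    by_cases hpk : (p, q) = (k, l)
    · rw [Prod.mk.injEq] at hpk
      obtain ⟨rfl, rfl⟩ := hpk
      simp [hr, Matrix.single_apply_same, inv_mul_cancel₀ (hGoff p q hpq)]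
    · have hr0 : r (p, q) = 0 := by simp [hr, hpk]
      rw [hr0, zero_mul, Matrix.single_apply_of_ne k l 1 p q]
      rw [Prod.mk.injEq] at hpk
      intro h
      exact hpk ⟨h.1.symm, h.2.symm⟩

lemma stdBasis_conjT (k l : Fin N) :
    (Matrix.single k l (1:ℂ))ᴴ = Matrix.single l k 1 := by
  ext i j
  simp [Matrix.conjTranspose_apply, Matrix.single, and_comm, apply_ite star]

include hgaps in
lemma pair_mem (G : Matrix (Fin N) (Fin N) ℂ) (hG : Gᴴ = G)
    (hGoff : ∀ k l : Fin N, k ≠ l → G k l ≠ 0) (hN : 0 < N)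
    (k l : Fin N) (hkl : k ≠ l) (c : ℂ) :
    c • Matrix.single k l (1:ℂ) + (starRingEnd ℂ) c • Matrix.single l k 1 ∈
      Submodule.span ℝ {A | ∃ m : ℕ, 1 ≤ m ∧ A = (Tmap lam)^[m] G} := by
  obtain ⟨n, z, hz0, hsum⟩ := exists_interp lam hgaps G hGoff hN k l hkl
  have hsum' : (∑ m ∈ Finset.range n, (starRingEnd ℂ) (z m) • (Tmap lam)^[m] G)
      = Matrix.single l k 1 := by
    have h := congrArg Matrix.conjTranspose hsum
    rw [Matrix.conjTranspose_sum, stdBasis_conjT] at h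
    rw [← h]
    refine Finset.sum_congr rfl fun m _ => ?_
    rw [Matrix.conjTranspose_smul, Tmap_iterate_herm lam G hG]
    rfl
  have key : c • Matrix.single k l (1:ℂ)
        + (starRingEnd ℂ) c • Matrix.single l k 1
      = ∑ m ∈ Finset.range n, (2 * (c * z m).re : ℝ) • (Tmap lam)^[m] G := by
    rw [← hsum, ← hsum', Finset.smul_sum, Finset.smul_sum, ← Finset.sum_add_distrib]
    refine Finset.sum_congr rfl fun m _ => ?_
    rw [smul_smul, smul_smul, ← _root_.map_mul, ← add_smul, ← Complex.coe_smul]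
    congr 1
    exact Complex.add_conj _
  rw [key]
  refine Submodule.sum_mem _ fun m hm => ?_
  rcases Nat.eq_zero_or_pos m with rfl | hm1
  · rw [hz0]
    simp
  · exact Submodule.smul_mem _ _ (Submodule.subset_span ⟨m, hm1, rfl⟩)

include hgaps in
lemma TcalD_le_span (G : Matrix (Fin N) (Fin N) ℂ) (hG : Gᴴ = G)
    (hGoff : ∀ k l : Fin N, k ≠ l → G k l ≠ 0) (hN : 0 < N) :
    TcalD N ≤ Submodule.span ℝ {A | ∃ m : ℕ, 1 ≤ m ∧ A = (Tmap lam)^[m] G} := by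
  intro H hH
  obtain ⟨hherm, hdiag⟩ := hH
  have hsym : ∀ i j, (starRingEnd ℂ) (H j i) = H i j := by
    intro i j
    conv_rhs => rw [← hherm]
    simp [Matrix.conjTranspose_apply]
  have key : H = (2⁻¹ : ℝ) • ∑ p ∈ Finset.univ.filter (fun p : Fin N × Fin N => p.1 ≠ p.2),
      (H p.1 p.2 • Matrix.single p.1 p.2 (1:ℂ)
        + (starRingEnd ℂ) (H p.1 p.2) • Matrix.single p.2 p.1 1) := by
    ext i j
    rw [Matrix.smul_apply, Matrix.sum_apply]
    have e1 : ∀ p ∈ Finset.univ.filter (fun p : Fin N × Fin N => p.1 ≠ p.2),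
        ((H p.1 p.2 • Matrix.single p.1 p.2 (1:ℂ)
          + (starRingEnd ℂ) (H p.1 p.2) • Matrix.single p.2 p.1 1 :
            Matrix (Fin N) (Fin N) ℂ)) i j
        = (if p = (i, j) then H i j else 0) + (if p = (j, i) then H i j else 0) := by
      intro p _
      rw [Matrix.add_apply, Matrix.smul_apply, Matrix.smul_apply]
      congr 1
      · by_cases hp : p = (i, j)
        · subst hp
          simp [Matrix.single_apply_same]
        · rw [if_neg hp, Matrix.single_apply_of_ne, smul_eq_mul, mul_zero]
          intro hc
          exact hp (Prod.ext hc.1 hc.2)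
      · by_cases hp : p = (j, i)
        · subst hp
          simp [Matrix.single_apply_same, hsym i j]
        · rw [if_neg hp, Matrix.single_apply_of_ne, smul_eq_mul, mul_zero]
          intro hc
          exact hp (Prod.ext hc.2 hc.1)
    rw [Finset.sum_congr rfl e1, Finset.sum_add_distrib, Finset.sum_ite_eq',
      Finset.sum_ite_eq']
    by_cases hij : i = j
    · subst hij
      simp [hdiag i]
    · have m1 : ((i, j) : Fin N × Fin N)
          ∈ Finset.univ.filter (fun p : Fin N × Fin N => p.1 ≠ p.2) := by
        simp [hij]
      have m2 : ((j, i) : Fin N × Fin N)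
          ∈ Finset.univ.filter (fun p : Fin N × Fin N => p.1 ≠ p.2) := by
        simp [Ne.symm hij]
      rw [if_pos m1, if_pos m2]
      rw [Complex.real_smul]
      push_cast
      ring
  rw [key]
  refine Submodule.smul_mem _ _ (Submodule.sum_mem _ fun p hp => ?_)
  exact pair_mem lam hgaps G hG hGoff hN p.1 p.2 (Finset.mem_filter.mp hp).2 (H p.1 p.2)

include hgaps in
lemma span_eq_TcalD (G : Matrix (Fin N) (Fin N) ℂ) (hG : Gᴴ = G)
    (hGoff : ∀ k l : Fin N, k ≠ l → G k l ≠ 0) (hN : 0 < N) :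
    Submodule.span ℝ {A | ∃ m : ℕ, 1 ≤ m ∧ A = (Tmap lam)^[m] G} = TcalD N :=
  le_antisymm (span_le_TcalD lam G hG) (TcalD_le_span lam hgaps G hG hGoff hN)

end Interp

/-- coordinates on `TcalD`: real part above the diagonal, imaginary part below. -/
noncomputable def coordMap (N : ℕ) :
    TcalD N →ₗ[ℝ] ({p : Fin N × Fin N // p.1 ≠ p.2} → ℝ) where
  toFun H := fun p => if p.1.1 < p.1.2 then ((H : Matrix (Fin N) (Fin N) ℂ) p.1.1 p.1.2).re
    else ((H : Matrix (Fin N) (Fin N) ℂ) p.1.1 p.1.2).im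
  map_add' H K := by
    ext p
    by_cases h : p.1.1 < p.1.2 <;>
      simp [h, Matrix.add_apply]
  map_smul' r H := by
    ext p
    by_cases h : p.1.1 < p.1.2 <;>
      simp [h, Matrix.smul_apply, Complex.smul_re, Complex.smul_im]

lemma coordMap_bijective (N : ℕ) : Function.Bijective (coordMap N) := by
  constructor
  · intro H K hHK
    have hcoord := fun p => congrFun hHK p
    obtain ⟨hHh, hHd⟩ := H.2
    obtain ⟨hKh, hKd⟩ := K.2
    have hHs : ∀ i j, (starRingEnd ℂ) ((H : Matrix (Fin N) (Fin N) ℂ) j i)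
        = (H : Matrix (Fin N) (Fin N) ℂ) i j := by
      intro i j; conv_rhs => rw [← hHh]
      simp [Matrix.conjTranspose_apply]
    have hKs : ∀ i j, (starRingEnd ℂ) ((K : Matrix (Fin N) (Fin N) ℂ) j i)
        = (K : Matrix (Fin N) (Fin N) ℂ) i j := by
      intro i j; conv_rhs => rw [← hKh]
      simp [Matrix.conjTranspose_apply]
    -- first, equality of strictly-upper entries
    have hup : ∀ i j : Fin N, i < j →
        (H : Matrix (Fin N) (Fin N) ℂ) i j = (K : Matrix (Fin N) (Fin N) ℂ) i j := by
      intro i j hij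
      have h1 := hcoord ⟨(i, j), ne_of_lt hij⟩
      have h2 := hcoord ⟨(j, i), (ne_of_lt hij).symm⟩
      simp only [coordMap, LinearMap.coe_mk, AddHom.coe_mk] at h1 h2
      rw [if_pos hij, if_pos hij] at h1
      rw [if_neg (by simpa using asymm hij), if_neg (by simpa using asymm hij)] at h2
      -- h1 : re equal at (i,j); h2 : im equal at (j,i)
      have hHim : ((H : Matrix (Fin N) (Fin N) ℂ) i j).im
          = -((H : Matrix (Fin N) (Fin N) ℂ) j i).im := by
        rw [← hHs i j]; simp
      have hKim : ((K : Matrix (Fin N) (Fin N) ℂ) i j).im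
          = -((K : Matrix (Fin N) (Fin N) ℂ) j i).im := by
        rw [← hKs i j]; simp
      apply Complex.ext
      · exact h1
      · rw [hHim, hKim, h2]
    apply Subtype.ext
    ext i j
    rcases lt_trichotomy i j with hij | hij | hij
    · exact hup i j hij
    · subst hij
      rw [hHd i, hKd i]
    · rw [← hHs i j, ← hKs i j, hup j i hij]
  · intro u
    classical
    set X : Matrix (Fin N) (Fin N) ℂ := Matrix.of (fun i j =>
      if h : i < j then ⟨u ⟨(i, j), ne_of_lt h⟩, -u ⟨(j, i), (ne_of_lt h).symm⟩⟩
      else if h' : j < i then ⟨u ⟨(j, i), ne_of_lt h'⟩, u ⟨(i, j), (ne_of_lt h').symm⟩⟩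
      else 0) with hX
    have hXs : ∀ i j, X i j = if h : i < j
        then (⟨u ⟨(i, j), ne_of_lt h⟩, -u ⟨(j, i), (ne_of_lt h).symm⟩⟩ : ℂ)
        else if h' : j < i then (⟨u ⟨(j, i), ne_of_lt h'⟩, u ⟨(i, j), (ne_of_lt h').symm⟩⟩ : ℂ)
        else 0 := fun i j => rfl
    have hXmem : X ∈ TcalD N := by
      constructor
      · ext i j
        rw [Matrix.conjTranspose_apply, hXs i j, hXs j i]
        rcases lt_trichotomy i j with hij | hij | hij
        · rw [dif_pos hij, dif_neg (asymm hij), dif_pos hij]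
          apply Complex.ext <;> simp
        · subst hij
          rw [dif_neg (lt_irrefl i), dif_neg (lt_irrefl i)]
          simp
        · rw [dif_neg (asymm hij), dif_pos hij, dif_neg (asymm hij), dif_pos hij]
          apply Complex.ext <;> simp
      · intro k
        rw [hXs k k, dif_neg (lt_irrefl k), dif_neg (lt_irrefl k)]
    refine ⟨⟨X, hXmem⟩, ?_⟩
    ext p
    obtain ⟨⟨i, j⟩, hij⟩ := p
    simp only [coordMap, LinearMap.coe_mk, AddHom.coe_mk]
    by_cases h : i < j
    · rw [if_pos h, hXs i j, dif_pos h]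
    · have h' : j < i := (hij.lt_or_gt).resolve_left h
      rw [if_neg h, hXs i j, dif_neg h, dif_pos h']

lemma card_ne_pairs (N : ℕ) :
    Fintype.card {p : Fin N × Fin N // p.1 ≠ p.2} = N * N - N := by
  rw [Fintype.card_subtype]
  have : (Finset.univ.filter fun p : Fin N × Fin N => p.1 ≠ p.2)
      = (Finset.univ : Finset (Fin N)).offDiag := by
    ext p
    simp [Finset.mem_offDiag]
  rw [this, Finset.offDiag_card]
  simp

lemma finrank_TcalD (N : ℕ) (hN : 0 < N) :
    Module.finrank ℝ (TcalD N) = N * (N - 1) := by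
  have := LinearEquiv.ofBijective (coordMap N) (coordMap_bijective N)
  rw [this.finrank_eq, Module.finrank_fintype_fun_eq_card, card_ne_pairs]
  rw [Nat.mul_sub, Nat.mul_one]


end


theorem TcalD_mem_iff (N : ℕ) (H : Matrix (Fin N) (Fin N) ℂ) :
    H ∈ TcalD N ↔ Hᴴ = H ∧ ∀ k, H k k = 0 := Iff.rfl

end Stmt15Aux

end Stmt15AuxSection

/-- **Lemma.** Under the hypotheses of the constructive controllability criterion, the subspace
`𝒯` of Hermitian operators whose diagonal matrix elements in the eigenbasis of `H₂` vanish is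
contained in `ℒ(H₁,H₂)`; in fact the real linear span of `T(H₁), T²(H₁), …`, where
`T(H) = {H₂,H}`, coincides with `𝒯`, which has real dimension `N(N−1)`. -/
theorem stmt15 {N : ℕ} (hN : 1 < N) (H₁ H₂ : Matrix (Fin N) (Fin N) ℂ)
    (h₁ : H₁.IsHermitian) (h₂ : H₂.IsHermitian)
    (lam : Fin N → ℝ) (ψ : Fin N → (Fin N → ℂ))
    (horth : ∀ k l, dotProduct (star (ψ k)) (ψ l) = if k = l then 1 else 0)
    (heig : ∀ k, H₂ *ᵥ ψ k = (lam k : ℂ) • ψ k)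
    (hoffdiag : ∀ k l, k ≠ l → dotProduct (star (ψ l)) (H₁ *ᵥ ψ k) ≠ 0)
    (hgaps : ∀ k l k' l' : Fin N, k ≠ l → k' ≠ l' → (k, l) ≠ (k', l') →
      lam k - lam l ≠ lam k' - lam l') :
    ({H : Matrix (Fin N) (Fin N) ℂ | H.IsHermitian ∧
        ∀ k, dotProduct (star (ψ k)) (H *ᵥ ψ k) = 0}
      ⊆ (LieDynAlg H₁ H₂ : Set (Matrix (Fin N) (Fin N) ℂ))) ∧
    ((Submodule.span ℝ {A : Matrix (Fin N) (Fin N) ℂ | ∃ m : ℕ, 1 ≤ m ∧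
        A = (fun H => Complex.I • (H₂ * H - H * H₂))^[m] H₁} :
          Set (Matrix (Fin N) (Fin N) ℂ)) =
      {H : Matrix (Fin N) (Fin N) ℂ | H.IsHermitian ∧
        ∀ k, dotProduct (star (ψ k)) (H *ᵥ ψ k) = 0}) ∧
    Module.finrank ℝ ↥(Submodule.span ℝ {A : Matrix (Fin N) (Fin N) ℂ | ∃ m : ℕ, 1 ≤ m ∧
        A = (fun H => Complex.I • (H₂ * H - H * H₂))^[m] H₁}) = N * (N - 1) := by
  classical
  have hN0 : 0 < N := Nat.lt_of_lt_of_le Nat.zero_lt_one hN.le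
  set P : Matrix (Fin N) (Fin N) ℂ := Matrix.of (fun i k => ψ k i) with hP
  have hPuP : Pᴴ * P = 1 := by
    ext k l
    rw [Matrix.mul_apply, Matrix.one_apply]
    simpa [Matrix.conjTranspose_apply, hP, dotProduct] using horth k l
  have hPPu : P * Pᴴ = 1 := mul_eq_one_comm.mp hPuP
  set Λ : Matrix (Fin N) (Fin N) ℂ := Matrix.diagonal (fun k => (lam k : ℂ)) with hΛ
  have hH2P : H₂ * P = P * Λ := by
    ext i k
    rw [Matrix.mul_apply, hΛ, Matrix.mul_diagonal]
    have h := congrFun (heig k) i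
    simpa [Matrix.mulVec, dotProduct, hP, mul_comm] using h
  have hPH2 : Pᴴ * H₂ = Λ * Pᴴ := by
    have h := congrArg Matrix.conjTranspose hH2P
    rw [Matrix.conjTranspose_mul, Matrix.conjTranspose_mul, h₂.eq] at h
    rwa [Matrix.diagonal_conjTranspose, show star (fun k => (lam k : ℂ)) = fun k => (lam k : ℂ)
      from funext fun k => by simp, ← hΛ] at h
  set G : Matrix (Fin N) (Fin N) ℂ := Pᴴ * H₁ * P with hGdef
  have hentry : ∀ (K : Matrix (Fin N) (Fin N) ℂ) (k l : Fin N),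
      (Pᴴ * K * P) k l = dotProduct (star (ψ k)) (K *ᵥ ψ l) := by
    intro K k l
    rw [Matrix.mul_assoc, Matrix.mul_apply, dotProduct]
    refine Finset.sum_congr rfl fun i _ => ?_
    simp [Matrix.mul_apply, Matrix.mulVec, dotProduct, Matrix.conjTranspose_apply,
      hP, Finset.mul_sum]
  have hGherm : Gᴴ = G := by
    rw [hGdef]
    simp [Matrix.conjTranspose_mul, Matrix.mul_assoc, h₁.eq]
  have hGoff : ∀ k l : Fin N, k ≠ l → G k l ≠ 0 := by
    intro k l hkl
    rw [hGdef, hentry]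
    exact hoffdiag l k (Ne.symm hkl)
  have cancel1 : ∀ X : Matrix (Fin N) (Fin N) ℂ, Pᴴ * (P * X * Pᴴ) * P = X := by
    intro X
    rw [show P * X * Pᴴ = P * (X * Pᴴ) from Matrix.mul_assoc _ _ _,
      ← Matrix.mul_assoc Pᴴ P (X * Pᴴ), hPuP, Matrix.one_mul,
      Matrix.mul_assoc X Pᴴ P, hPuP, Matrix.mul_one]
  have cancel2 : ∀ X : Matrix (Fin N) (Fin N) ℂ, P * (Pᴴ * X * P) * Pᴴ = X := by
    intro X
    rw [show Pᴴ * X * P = Pᴴ * (X * P) from Matrix.mul_assoc _ _ _,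
      ← Matrix.mul_assoc P Pᴴ (X * P), hPPu, Matrix.one_mul,
      Matrix.mul_assoc X P Pᴴ, hPPu, Matrix.mul_one]
  set e : Matrix (Fin N) (Fin N) ℂ ≃ₗ[ℝ] Matrix (Fin N) (Fin N) ℂ :=
    { toFun := fun X => P * X * Pᴴ
      invFun := fun X => Pᴴ * X * P
      map_add' := fun X Y => by rw [Matrix.mul_add, Matrix.add_mul]
      map_smul' := fun r X => by
        rw [RingHom.id_apply, Matrix.mul_smul, Matrix.smul_mul]
      left_inv := cancel1
      right_inv := cancel2 } with he
  have he_apply : ∀ X, e X = P * X * Pᴴ := fun _ => rfl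
  have hsemi : ∀ X, e (Stmt15Aux.Tmap lam X) = Complex.I • (H₂ * (e X) - (e X) * H₂) := by
    intro X
    rw [he_apply, he_apply, Stmt15Aux.Tmap, ← hΛ, Matrix.mul_smul, Matrix.smul_mul]
    congr 1
    rw [Matrix.mul_sub, Matrix.sub_mul]
    congr 1
    · rw [← Matrix.mul_assoc P Λ X, ← hH2P, Matrix.mul_assoc H₂ P X,
        Matrix.mul_assoc H₂ (P * X) Pᴴ]
    · rw [← Matrix.mul_assoc P X Λ, Matrix.mul_assoc (P * X) Λ Pᴴ, ← hPH2,
        ← Matrix.mul_assoc (P * X) Pᴴ H₂]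
  have heG : e G = H₁ := by rw [he_apply, hGdef]; exact cancel2 H₁
  have hiter : ∀ m, (fun H => Complex.I • (H₂ * H - H * H₂))^[m] H₁
      = e ((Stmt15Aux.Tmap lam)^[m] G) := by
    intro m
    induction m with
    | zero => simpa using heG.symm
    | succ m ih =>
      rw [Function.iterate_succ_apply', Function.iterate_succ_apply', ih, hsemi]
  have hgens : {A : Matrix (Fin N) (Fin N) ℂ | ∃ m : ℕ, 1 ≤ m ∧
        A = (fun H => Complex.I • (H₂ * H - H * H₂))^[m] H₁}
      = ⇑(e : Matrix (Fin N) (Fin N) ℂ →ₗ[ℝ] Matrix (Fin N) (Fin N) ℂ) ''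
        {A | ∃ m : ℕ, 1 ≤ m ∧ A = (Stmt15Aux.Tmap lam)^[m] G} := by
    ext A
    simp only [Set.mem_image, Set.mem_setOf_eq, LinearEquiv.coe_coe]
    constructor
    · rintro ⟨m, hm, rfl⟩
      exact ⟨_, ⟨m, hm, rfl⟩, (hiter m).symm⟩
    · rintro ⟨B, ⟨m, hm, rfl⟩, rfl⟩
      exact ⟨m, hm, (hiter m).symm⟩
  have hspan : Submodule.span ℝ {A : Matrix (Fin N) (Fin N) ℂ | ∃ m : ℕ, 1 ≤ m ∧
        A = (fun H => Complex.I • (H₂ * H - H * H₂))^[m] H₁}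
      = Submodule.map (e : Matrix (Fin N) (Fin N) ℂ →ₗ[ℝ] Matrix (Fin N) (Fin N) ℂ)
        (Stmt15Aux.TcalD N) := by
    rw [hgens, ← Submodule.map_span,
      Stmt15Aux.span_eq_TcalD lam hgaps G hGherm hGoff hN0]
  have hT : (Submodule.map (e : Matrix (Fin N) (Fin N) ℂ →ₗ[ℝ] Matrix (Fin N) (Fin N) ℂ)
        (Stmt15Aux.TcalD N) : Set (Matrix (Fin N) (Fin N) ℂ))
      = {H : Matrix (Fin N) (Fin N) ℂ | H.IsHermitian ∧
        ∀ k, dotProduct (star (ψ k)) (H *ᵥ ψ k) = 0} := by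
    ext H
    simp only [Submodule.map_coe, Set.mem_image, SetLike.mem_coe, Set.mem_setOf_eq,
      LinearEquiv.coe_coe]
    constructor
    · rintro ⟨X, hX, rfl⟩
      obtain ⟨hXh, hXd⟩ := (Stmt15Aux.TcalD_mem_iff N X).mp hX
      constructor
      · show (P * X * Pᴴ)ᴴ = P * X * Pᴴ
        simp [Matrix.conjTranspose_mul, Matrix.mul_assoc, hXh]
      · intro k
        rw [← hentry]
        show (Pᴴ * (P * X * Pᴴ) * P) k k = 0
        rw [cancel1]
        exact hXd k
    · rintro ⟨hHh, hHd⟩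
      refine ⟨Pᴴ * H * P, (Stmt15Aux.TcalD_mem_iff N _).mpr ⟨?_, fun k => ?_⟩, ?_⟩
      · simp [Matrix.conjTranspose_mul, Matrix.mul_assoc, hHh.eq]
      · rw [hentry, hHd k]
      · show P * (Pᴴ * H * P) * Pᴴ = H
        exact cancel2 H
  have hspan2 : (Submodule.span ℝ {A : Matrix (Fin N) (Fin N) ℂ | ∃ m : ℕ, 1 ≤ m ∧
        A = (fun H => Complex.I • (H₂ * H - H * H₂))^[m] H₁} :
          Set (Matrix (Fin N) (Fin N) ℂ))
      = {H : Matrix (Fin N) (Fin N) ℂ | H.IsHermitian ∧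
        ∀ k, dotProduct (star (ψ k)) (H *ᵥ ψ k) = 0} := by
    rw [hspan, hT]
  refine ⟨?_, hspan2, ?_⟩
  · -- part 1
    rw [← hspan2]
    have hH1L : H₁ ∈ LieDynAlg H₁ H₂ := by
      simp only [LieDynAlg]
      exact Submodule.mem_sInf.mpr fun p hp => hp.1
    have hH2L : H₂ ∈ LieDynAlg H₁ H₂ := by
      simp only [LieDynAlg]
      exact Submodule.mem_sInf.mpr fun p hp => hp.2.1
    have hclosed : ∀ A ∈ LieDynAlg H₁ H₂, ∀ B ∈ LieDynAlg H₁ H₂,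
        Complex.I • (A * B - B * A) ∈ LieDynAlg H₁ H₂ := by
      intro A hA B hB
      simp only [LieDynAlg] at hA hB ⊢
      exact Submodule.mem_sInf.mpr fun p hp =>
        hp.2.2 A (Submodule.mem_sInf.mp hA p hp) B (Submodule.mem_sInf.mp hB p hp)
    have hmem : ∀ m, (fun H => Complex.I • (H₂ * H - H * H₂))^[m] H₁ ∈ LieDynAlg H₁ H₂ := by
      intro m
      induction m with
      | zero => exact hH1L
      | succ m ih =>
        rw [Function.iterate_succ_apply']
        exact hclosed H₂ hH2L _ ih
    exact fun A hA => Submodule.span_le.mpr (fun A' hA' => by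
      obtain ⟨m, _, rfl⟩ := hA'
      exact hmem m) hA
  · -- part 3
    rw [hspan, LinearEquiv.finrank_map_eq, Stmt15Aux.finrank_TcalD N hN0]
end

section
/- Let H₁, H₂ be Hermitian operators on ℂ^N satisfying the hypotheses of the previous statement ((H₁ψ_k,ψ_j) ≠ 0 for all k ≠ j, and all differences λ_k − λ_l of eigenvalues of H₂ for k ≠ l are pairwise distinct). Then for all k ≠ j the Hermitian operator E_{k,j}, defined in the eigenbasis ψ₁,…,ψ_N of H₂ by (E_{k,j}ψ_{k'},ψ_{j'}) = 1 if k' = j' = k, −1 if k' = j' = j, and 0 otherwise, belongs to ℒ(H₁,H₂). -/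
open Matrix MeasureTheory Filter Topology
open scoped ENNReal

lemma core {N : ℕ} (d : Fin N → ℝ) (C : Matrix (Fin N) (Fin N) ℂ)
    (hC : Cᴴ = C) (hCoff : ∀ a b : Fin N, a ≠ b → C a b ≠ 0)
    (hgaps : ∀ a b a' b' : Fin N, a ≠ b → a' ≠ b' → (a, b) ≠ (a', b') →
      d a - d b ≠ d a' - d b')
    (p : Submodule ℝ (Matrix (Fin N) (Fin N) ℂ))
    (hCp : C ∈ p) (hDp : Matrix.diagonal (fun i => (d i : ℂ)) ∈ p)
    (hcl : ∀ A ∈ p, ∀ B ∈ p, Complex.I • (A * B - B * A) ∈ p)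
    (k j : Fin N) (hkj : k ≠ j) :
    Matrix.single k k (1:ℂ) - Matrix.single j j (1:ℂ) ∈ p := by
  set D : Matrix (Fin N) (Fin N) ℂ := Matrix.diagonal (fun i => (d i : ℂ)) with hD
  set T : Matrix (Fin N) (Fin N) ℂ → Matrix (Fin N) (Fin N) ℂ :=
    fun A => Complex.I • (D * A - A * D) with hTdef
  have hT : ∀ A ∈ p, T A ∈ p := fun A hA => hcl D hDp A hA
  have hTe : ∀ (A : Matrix (Fin N) (Fin N) ℂ) (a b : Fin N),
      T A a b = Complex.I * ((d a : ℂ) - (d b : ℂ)) * A a b := by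
    intro A a b
    simp [hTdef, hD, Matrix.sub_apply, Matrix.diagonal_mul, Matrix.mul_diagonal]
    ring
  -- squared-gap notation
  have hsq : ∀ (A : Matrix (Fin N) (Fin N) ℂ) (a b : Fin N),
      T (T A) a b = -(((d a - d b)^2 : ℝ) : ℂ) * A a b := by
    intro A a b
    rw [hTe, hTe]
    push_cast
    ring_nf
    rw [Complex.I_sq]
    ring
  have key : ∀ F : Finset (Fin N × Fin N), ∃ A ∈ p, ∀ a b : Fin N,
      A a b = (((∏ q ∈ F, ((d q.1 - d q.2)^2 - (d a - d b)^2)) : ℝ) : ℂ) * C a b := by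
    intro F
    induction F using Finset.induction_on with
    | empty => exact ⟨C, hCp, by simp⟩
    | @insert q F hq ih =>
      obtain ⟨A, hA, hAe⟩ := ih
      refine ⟨T (T A) + ((d q.1 - d q.2)^2 : ℝ) • A,
        p.add_mem (hT _ (hT A hA)) (p.smul_mem _ hA), ?_⟩
      intro a b
      rw [Matrix.add_apply, hsq, hAe, Matrix.smul_apply, hAe, Finset.prod_insert hq,
        Complex.real_smul]
      push_cast
      ring
  classical
  set ω : ℝ := d k - d j with hw
  have hpairne : (k, j) ≠ (j, k) := by simp [Prod.ext_iff, hkj]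
  have hωne : ω ≠ 0 := by
    have h := hgaps k j j k hkj hkj.symm hpairne
    intro h0
    apply h
    have : d k = d j := by linarith [h0, hw.symm]
    rw [this]
  clear_value ω
  set F₀ : Finset (Fin N × Fin N) := Finset.univ.filter
    (fun q => q.1 ≠ q.2 ∧ q ≠ (k, j) ∧ q ≠ (j, k)) with hF₀
  obtain ⟨A, hA, hAe⟩ := key F₀
  set c : ℝ := -ω^2 * ∏ q ∈ F₀, ((d q.1 - d q.2)^2 - ω^2) with hc
  clear_value c
  have hcne : c ≠ 0 := by
    rw [hc]
    apply mul_ne_zero (by simpa using pow_ne_zero 2 hωne)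
    rw [Finset.prod_ne_zero_iff]
    intro q hqm
    rw [hF₀, Finset.mem_filter] at hqm
    obtain ⟨-, hq1, hq2, hq3⟩ := hqm
    intro h0
    have hsq' : (d q.1 - d q.2)^2 = ω^2 := by linarith
    rcases sq_eq_sq_iff_eq_or_eq_neg.mp hsq' with h | h
    · exact hgaps q.1 q.2 k j hq1 hkj
        (by rw [Prod.mk.eta]; exact hq2) (by rw [h, hw])
    · exact hgaps q.1 q.2 j k hq1 hkj.symm
        (by rw [Prod.mk.eta]; exact hq3) (by rw [h, hw]; ring)
  have hBp : T (T A) ∈ p := hT _ (hT _ hA)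
  set X : Matrix (Fin N) (Fin N) ℂ :=
    Matrix.single k j (C k j) + Matrix.single j k (C j k) with hX
  have hXapp : ∀ a b : Fin N, X a b =
      if k = a ∧ j = b then C k j else if j = a ∧ k = b then C j k else 0 := by
    intro a b
    rw [hX, Matrix.add_apply]
    simp only [Matrix.single, Matrix.of_apply]
    by_cases h1 : k = a ∧ j = b <;> by_cases h2 : j = a ∧ k = b
    · exact absurd (h1.1.trans h2.1.symm) hkj
    · simp only [if_pos h1, if_neg h2, add_zero]
    · simp only [if_neg h1, if_pos h2, zero_add]
    · simp only [if_neg h1, if_neg h2, add_zero]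
  have hBX : T (T A) = c • X := by
    ext a b
    rw [hsq A a b, hAe, Matrix.smul_apply, hXapp, Complex.real_smul]
    by_cases h1 : k = a ∧ j = b
    · obtain ⟨rfl, rfl⟩ := h1
      rw [if_pos ⟨rfl, rfl⟩]
      have hceq : c = -((d k - d j)^2) *
          ∏ q ∈ F₀, ((d q.1 - d q.2)^2 - (d k - d j)^2) := by
        rw [hc, hw]
      rw [hceq]
      push_cast
      ring
    · by_cases h2 : j = a ∧ k = b
      · obtain ⟨rfl, rfl⟩ := h2
        rw [if_neg h1, if_pos ⟨rfl, rfl⟩]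
        have hsw : (d j - d k)^2 = ω^2 := by rw [hw]; ring
        rw [hsw, hc]
        push_cast
        ring
      · simp only [if_neg h1, if_neg h2, mul_zero]
        by_cases hab : a = b
        · subst hab
          simp
        · have hmem : (a, b) ∈ F₀ := by
            rw [hF₀, Finset.mem_filter]
            refine ⟨Finset.mem_univ _, hab, ?_, ?_⟩ <;>
              simp only [ne_eq, Prod.mk.injEq, not_and] <;> intro u v
            · exact h1 ⟨u.symm, v.symm⟩
            · exact h2 ⟨u.symm, v.symm⟩
          rw [Finset.prod_eq_zero hmem (by ring)]
          simp
  have hXp : X ∈ p := by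
    have h := p.smul_mem c⁻¹ hBp
    rwa [hBX, smul_smul, inv_mul_cancel₀ hcne, one_smul] at h
  have hYp : T X ∈ p := hT _ hXp
  have hYe : T X = Matrix.single k j (Complex.I * ω * C k j) +
      Matrix.single j k (-(Complex.I * ω) * C j k) := by
    ext a b
    rw [hTe, hXapp, Matrix.add_apply]
    simp only [Matrix.single, Matrix.of_apply]
    by_cases h1 : k = a ∧ j = b
    · have h2 : ¬(j = a ∧ k = b) := fun h => hkj (h1.1.trans h.1.symm)
      simp only [if_pos h1, if_neg h2, add_zero]
      obtain ⟨rfl, rfl⟩ := h1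
      rw [hw]
      push_cast
      ring
    · by_cases h2 : j = a ∧ k = b
      · simp only [if_neg h1, if_pos h2, zero_add]
        obtain ⟨rfl, rfl⟩ := h2
        rw [hw]
        push_cast
        ring
      · simp only [if_neg h1, if_neg h2, mul_zero, add_zero]
  have hZp : Complex.I • (X * (T X) - (T X) * X) ∈ p := hcl _ hXp _ hYp
  have hCjk : C j k = starRingEnd ℂ (C k j) := by
    conv_lhs => rw [← hC]
    simp [Matrix.conjTranspose_apply]
  have hZe : Complex.I • (X * (T X) - (T X) * X)
      = (2 * ω * Complex.normSq (C k j) : ℝ) •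
        (Matrix.single k k (1:ℂ) - Matrix.single j j (1:ℂ)) := by
    have h1 : j ≠ k := hkj.symm
    rw [hYe, hX]
    simp only [add_mul, mul_add, Matrix.single_mul_single_same, ne_eq,
      Matrix.single_mul_single_of_ne, hkj, h1, not_false_eq_true, add_zero, zero_add]
    rw [hCjk]
    have hm := Complex.mul_conj (C k j)
    have hI := Complex.I_mul_I
    ext a b
    simp only [Matrix.smul_apply, Matrix.sub_apply, Matrix.add_apply, Matrix.single,
      Matrix.of_apply, smul_eq_mul, Complex.real_smul]
    by_cases ha : k = a ∧ k = b <;> by_cases hb : j = a ∧ j = b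
    · exact absurd (ha.1.trans hb.1.symm) hkj
    · simp only [if_pos ha, if_neg hb]
      push_cast
      linear_combination (-2 * (ω:ℂ) * (C k j) * (starRingEnd ℂ) (C k j)) * hI
        + 2 * (ω:ℂ) * hm
    · simp only [if_neg ha, if_pos hb]
      push_cast
      linear_combination (2 * (ω:ℂ) * (C k j) * (starRingEnd ℂ) (C k j)) * hI
        - 2 * (ω:ℂ) * hm
    · simp only [if_neg ha, if_neg hb]
      ring
  have hr : (2 * ω * Complex.normSq (C k j) : ℝ) ≠ 0 :=
    mul_ne_zero (mul_ne_zero two_ne_zero hωne)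
      (by simpa [Complex.normSq_eq_zero] using hCoff k j hkj)
  have h := p.smul_mem (2 * ω * Complex.normSq (C k j))⁻¹ hZp
  rwa [hZe, smul_smul, inv_mul_cancel₀ hr, one_smul] at h

/-- **Lemma.** Under the hypotheses of the constructive controllability criterion, for all
`k ≠ j` the Hermitian operator `E_{k,j}` — which, in the eigenbasis `ψ₁,…,ψ_N` of `H₂`, is
diagonal with entry `+1` at position `k`, `−1` at position `j` and `0` elsewhere, i.e.
`E_{k,j} = ψ_k ψ_k^* − ψ_j ψ_j^*` — belongs to `ℒ(H₁,H₂)`. -/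
theorem stmt16 {N : ℕ} (hN : 1 < N) (H₁ H₂ : Matrix (Fin N) (Fin N) ℂ)
    (h₁ : H₁.IsHermitian) (h₂ : H₂.IsHermitian)
    (lam : Fin N → ℝ) (ψ : Fin N → (Fin N → ℂ))
    (horth : ∀ k l, dotProduct (star (ψ k)) (ψ l) = if k = l then 1 else 0)
    (heig : ∀ k, H₂ *ᵥ ψ k = (lam k : ℂ) • ψ k)
    (hoffdiag : ∀ k l, k ≠ l → dotProduct (star (ψ l)) (H₁ *ᵥ ψ k) ≠ 0)
    (hgaps : ∀ k l k' l' : Fin N, k ≠ l → k' ≠ l' → (k, l) ≠ (k', l') →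
      lam k - lam l ≠ lam k' - lam l') :
    ∀ k j : Fin N, k ≠ j →
      Matrix.vecMulVec (ψ k) (star (ψ k)) - Matrix.vecMulVec (ψ j) (star (ψ j))
        ∈ LieDynAlg H₁ H₂ := by
  intro k j hkj
  have hdef : LieDynAlg H₁ H₂ = sInf {p : Submodule ℝ (Matrix (Fin N) (Fin N) ℂ) |
      H₁ ∈ p ∧ H₂ ∈ p ∧ ∀ A ∈ p, ∀ B ∈ p, Complex.I • (A * B - B * A) ∈ p} := rfl
  rw [hdef, Submodule.mem_sInf]
  rintro p ⟨hp1, hp2, hpcl⟩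
  classical
  set U : Matrix (Fin N) (Fin N) ℂ := Matrix.of (fun i a => ψ a i) with hU
  have hUU : Uᴴ * U = 1 := by
    ext a b
    have h := horth a b
    simp only [dotProduct, Pi.star_apply] at h
    simp only [Matrix.mul_apply, Matrix.conjTranspose_apply, Matrix.one_apply, hU,
      Matrix.of_apply]
    exact h
  have hUU' : U * Uᴴ = 1 := mul_eq_one_comm.mp hUU
  set C : Matrix (Fin N) (Fin N) ℂ := Uᴴ * H₁ * U with hCdef
  set D : Matrix (Fin N) (Fin N) ℂ := Uᴴ * H₂ * U with hDdef
  have hH2U : H₂ * U = U * Matrix.diagonal (fun i => (lam i : ℂ)) := by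
    ext i a
    have h := congrFun (heig a) i
    simp only [Matrix.mulVec, dotProduct, Pi.smul_apply, smul_eq_mul] at h
    rw [Matrix.mul_diagonal]
    simp only [Matrix.mul_apply, hU, Matrix.of_apply]
    rw [mul_comm (ψ a i)]
    exact h
  have hDdiag : D = Matrix.diagonal (fun i => (lam i : ℂ)) := by
    rw [hDdef, Matrix.mul_assoc, hH2U, ← Matrix.mul_assoc, hUU, Matrix.one_mul]
  have hCherm : Cᴴ = C := by
    rw [hCdef]
    rw [Matrix.conjTranspose_mul, Matrix.conjTranspose_mul,
      Matrix.conjTranspose_conjTranspose, h₁.eq, Matrix.mul_assoc]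
  have hCe : ∀ a b, C a b = dotProduct (star (ψ a)) (H₁ *ᵥ ψ b) := by
    intro a b
    rw [hCdef]
    simp only [Matrix.mul_apply, Matrix.conjTranspose_apply, Matrix.mulVec,
      dotProduct, hU, Matrix.of_apply, Pi.star_apply, Finset.mul_sum,
      Finset.sum_mul]
    rw [Finset.sum_comm]
    exact Finset.sum_congr rfl fun i _ => Finset.sum_congr rfl fun x _ => by ring
  have hCoff : ∀ a b : Fin N, a ≠ b → C a b ≠ 0 := by
    intro a b hab
    rw [hCe]
    exact hoffdiag b a hab.symm
  let L : Matrix (Fin N) (Fin N) ℂ →ₗ[ℝ] Matrix (Fin N) (Fin N) ℂ :=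
    { toFun := fun A => U * A * Uᴴ
      map_add' := fun A B => by
        show U * (A + B) * Uᴴ = U * A * Uᴴ + U * B * Uᴴ
        rw [Matrix.mul_add, Matrix.add_mul]
      map_smul' := fun r A => by
        show U * (r • A) * Uᴴ = r • (U * A * Uᴴ)
        rw [Matrix.mul_smul, Matrix.smul_mul] }
  set q : Submodule ℝ (Matrix (Fin N) (Fin N) ℂ) := Submodule.comap L p with hq
  have hmemq : ∀ A : Matrix (Fin N) (Fin N) ℂ, A ∈ q ↔ U * A * Uᴴ ∈ p :=
    fun A => Iff.rfl
  have hmid : ∀ A B : Matrix (Fin N) (Fin N) ℂ,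
      (U * A * Uᴴ) * (U * B * Uᴴ) = U * (A * B) * Uᴴ := by
    intro A B
    simp only [Matrix.mul_assoc]
    rw [← Matrix.mul_assoc Uᴴ U, hUU, Matrix.one_mul]
  have hCq : C ∈ q := by
    rw [hmemq, hCdef]
    have : U * (Uᴴ * H₁ * U) * Uᴴ = H₁ := by
      calc U * (Uᴴ * H₁ * U) * Uᴴ = (U * Uᴴ) * (H₁ * (U * Uᴴ)) := by
            simp only [Matrix.mul_assoc]
        _ = H₁ := by rw [hUU', Matrix.one_mul, Matrix.mul_one]
    rw [this]
    exact hp1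
  have hDq : Matrix.diagonal (fun i => (lam i : ℂ)) ∈ q := by
    rw [← hDdiag, hmemq, hDdef]
    have : U * (Uᴴ * H₂ * U) * Uᴴ = H₂ := by
      calc U * (Uᴴ * H₂ * U) * Uᴴ = (U * Uᴴ) * (H₂ * (U * Uᴴ)) := by
            simp only [Matrix.mul_assoc]
        _ = H₂ := by rw [hUU', Matrix.one_mul, Matrix.mul_one]
    rw [this]
    exact hp2
  have hclq : ∀ A ∈ q, ∀ B ∈ q, Complex.I • (A * B - B * A) ∈ q := by
    intro A hA B hB
    rw [hmemq] at hA hB ⊢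
    have heq : U * (Complex.I • (A * B - B * A)) * Uᴴ
        = Complex.I • ((U * A * Uᴴ) * (U * B * Uᴴ) - (U * B * Uᴴ) * (U * A * Uᴴ)) := by
      rw [Matrix.mul_smul, Matrix.smul_mul, hmid, hmid, Matrix.mul_sub, Matrix.sub_mul]
    rw [heq]
    exact hpcl _ hA _ hB
  have hE := core lam C hCherm hCoff hgaps q hCq hDq hclq k j hkj
  rw [hmemq] at hE
  have hstd : ∀ m : Fin N, U * Matrix.single m m (1:ℂ) * Uᴴ
      = Matrix.vecMulVec (ψ m) (star (ψ m)) := by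
    intro m
    ext i i'
    simp only [Matrix.mul_apply, Matrix.single, Matrix.of_apply,
      Matrix.conjTranspose_apply, Matrix.vecMulVec_apply, hU, Pi.star_apply,
      mul_ite, ite_mul, one_mul, zero_mul, mul_zero, mul_one, Finset.sum_ite_eq,
      Finset.mem_univ, if_true, ← ite_and]
    have hin : ∀ x, (∑ x1, if m = x1 ∧ m = x then ψ x1 i else 0)
        = if m = x then ψ m i else 0 := by
      intro x
      by_cases h : m = x <;> simp [h]
    simp only [hin, ite_mul, zero_mul, Finset.sum_ite_eq, Finset.mem_univ, if_true]
  rwa [Matrix.mul_sub, Matrix.sub_mul, hstd k, hstd j] at hE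
end
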